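/- Let φ ∈ C([0,1]), γ > 0, and define the bounded operator ℒ on L²(0,1) × ℝ by ℒ(ξ, ξ°) = (s ↦ ξ° − ξ(s) + γ ∫_0^1 K(s,ζ) ξ(ζ) dζ, 0), with K(s,ζ) = ∫_{max(s,ζ)}^1 cos(φ(σ)) dσ. Then for every λ ∈ ℂ \ {0}: λ belongs to the spectrum of ℒ if and only if 1 + λ belongs to the spectrum of γ𝒦 on L²(0,1), where 𝒦 is the integral operator with kernel K. In particular σ(ℒ) ⊂ ℝ is countable, −1 ∈ σ(ℒ), and −1 is the only possible accumulation point of σ(ℒ). -/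

import Mathlib

open MeasureTheory Set Filter ContinuousLinearMap Topology intervalIntegral
open scoped RealInnerProductSpace NNReal BoundedContinuousFunction


open MeasureTheory Set Filter

/-- The measure of the interval `[0,1]`, underlying the space `L²(0,1)`. -/
noncomputable def μ01 : Measure ℝ := volume.restrict (Icc (0:ℝ) 1)

theorem aux_spec_prod {E : Type*} [NormedAddCommGroup E] [NormedSpace ℝ E] [CompleteSpace E]
    (T : E →L[ℝ] E) (e : E) (lam : ℝ) (hlam : lam ≠ 0) :
    lam ∈ spectrum ℝ ((inl ℝ E ℝ).comp (T.comp (fst ℝ E ℝ) + (snd ℝ E ℝ).smulRight e))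
      ↔ lam ∈ spectrum ℝ T := by
  set M := (inl ℝ E ℝ).comp (T.comp (fst ℝ E ℝ) + (snd ℝ E ℝ).smulRight e) with hM
  rw [← not_iff_not, spectrum.notMem_iff, spectrum.notMem_iff]
  have happM : ∀ p : E × ℝ, (algebraMap ℝ ((E × ℝ) →L[ℝ] (E × ℝ)) lam - M) p
      = (lam • p.1 - (T p.1 + p.2 • e), lam * p.2) := by
    intro p
    simp [hM, Algebra.algebraMap_eq_smul_one, Prod.smul_def, smul_eq_mul, sub_zero]
  constructor
  · rintro ⟨un, hun⟩
    set R := ((un⁻¹ : _) : (E × ℝ) →L[ℝ] (E × ℝ)) with hRdef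
    have hRW : ∀ z, R ((algebraMap ℝ _ lam - M) z) = z := by
      intro z
      calc R ((algebraMap ℝ _ lam - M) z) = (↑un⁻¹ * (algebraMap ℝ _ lam - M)) z := rfl
        _ = z := by rw [← hun, un.inv_mul]; rfl
    have hWR : ∀ z, (algebraMap ℝ _ lam - M) (R z) = z := by
      intro z
      calc (algebraMap ℝ _ lam - M) (R z) = ((algebraMap ℝ _ lam - M) * ↑un⁻¹) z := rfl
        _ = z := by rw [← hun, un.mul_inv]; rfl
    set S := (fst ℝ E ℝ).comp (R.comp (inl ℝ E ℝ)) with hS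
    have hSapp : ∀ f : E, S f = (R (f, 0)).1 := fun f => rfl
    rw [isUnit_iff_exists]
    refine ⟨S, ContinuousLinearMap.ext fun f => ?_, ContinuousLinearMap.ext fun ξ => ?_⟩
    · have h3 := hWR (f, 0)
      rw [happM] at h3
      have h4 : lam * (R (f,0)).2 = 0 := (Prod.ext_iff.mp h3).2
      have h5 : (R (f,0)).2 = 0 := by
        rcases mul_eq_zero.mp h4 with h | h
        · exact absurd h hlam
        · exact h
      have h6 : lam • (R (f,0)).1 - (T (R (f,0)).1 + (R (f,0)).2 • e) = f :=
        (Prod.ext_iff.mp h3).1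
      rw [h5, zero_smul, add_zero] at h6
      calc ((algebraMap ℝ _ lam - T) * S) f = lam • (S f) - T (S f) := by
            simp [mul_apply, Algebra.algebraMap_eq_smul_one]
        _ = f := by rw [hSapp]; exact h6
        _ = (1 : E →L[ℝ] E) f := rfl
    · have key : (algebraMap ℝ ((E × ℝ) →L[ℝ] (E × ℝ)) lam - M) (ξ, 0)
          = ((lam • ξ - T ξ), 0) := by rw [happM]; simp
      have h7 := congrArg Prod.fst (congrArg R key.symm)
      rw [hRW] at h7
      calc (S * (algebraMap ℝ _ lam - T)) ξ = S (lam • ξ - T ξ) := by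
            simp [mul_apply, Algebra.algebraMap_eq_smul_one]
        _ = ξ := by rw [hSapp]; exact h7
        _ = (1 : E →L[ℝ] E) ξ := rfl
  · rintro ⟨un, hun⟩
    set S := ((un⁻¹ : _) : E →L[ℝ] E) with hSdef
    have hSW : ∀ ξ, S ((algebraMap ℝ _ lam - T) ξ) = ξ := by
      intro ξ
      calc S ((algebraMap ℝ _ lam - T) ξ) = (↑un⁻¹ * (algebraMap ℝ _ lam - T)) ξ := rfl
        _ = ξ := by rw [← hun, un.inv_mul]; rfl
    have hWS : ∀ f, (algebraMap ℝ _ lam - T) (S f) = f := by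
      intro f
      calc (algebraMap ℝ _ lam - T) (S f) = ((algebraMap ℝ _ lam - T) * ↑un⁻¹) f := rfl
        _ = f := by rw [← hun, un.mul_inv]; rfl
    have hWapp : ∀ ξ : E, (algebraMap ℝ (E →L[ℝ] E) lam - T) ξ = lam • ξ - T ξ := by
      intro ξ; simp [Algebra.algebraMap_eq_smul_one]
    set R : (E × ℝ) →L[ℝ] (E × ℝ) :=
      (S.comp ((fst ℝ E ℝ) + lam⁻¹ • (snd ℝ E ℝ).smulRight e)).prod (lam⁻¹ • (snd ℝ E ℝ)) with hR
    have hRapp : ∀ p : E × ℝ, R p = (S (p.1 + (lam⁻¹ * p.2) • e), lam⁻¹ * p.2) := by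
      intro p
      simp [hR, smul_smul, prod_apply, smul_eq_mul]
    rw [isUnit_iff_exists]
    refine ⟨R, ContinuousLinearMap.ext fun p => ?_, ContinuousLinearMap.ext fun p => ?_⟩
    · have h1 : lam • S (p.1 + (lam⁻¹ * p.2) • e) - T (S (p.1 + (lam⁻¹ * p.2) • e))
          = p.1 + (lam⁻¹ * p.2) • e := by rw [← hWapp]; exact hWS _
      calc ((algebraMap ℝ _ lam - M) * R) p = (algebraMap ℝ _ lam - M) (R p) := rfl
        _ = (lam • (R p).1 - (T (R p).1 + (R p).2 • e), lam * (R p).2) := happM _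
        _ = p := by
            rw [hRapp]
            dsimp only
            rw [Prod.ext_iff]
            constructor
            · dsimp only
              rw [← sub_sub, h1]
              exact add_sub_cancel_right _ _
            · dsimp only
              rw [← mul_assoc, mul_inv_cancel₀ hlam, one_mul]
        _ = (1 : (E × ℝ) →L[ℝ] (E × ℝ)) p := rfl
    · calc (R * (algebraMap ℝ _ lam - M)) p = R ((algebraMap ℝ _ lam - M) p) := rfl
        _ = R (lam • p.1 - (T p.1 + p.2 • e), lam * p.2) := by rw [happM]
        _ = p := by
            rw [hRapp]
            dsimp only
            rw [show lam⁻¹ * (lam * p.2) = p.2 by field_simp]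
            rw [Prod.ext_iff]
            refine ⟨?_, rfl⟩
            dsimp only
            rw [show lam • p.1 - (T p.1 + p.2 • e) + p.2 • e = lam • p.1 - T p.1 by abel,
              ← hWapp]
            exact hSW _
        _ = (1 : (E × ℝ) →L[ℝ] (E × ℝ)) p := rfl

theorem aux_accPt_finite {X : Type*} [TopologicalSpace X] [T1Space X] {F : Set X} (hF : F.Finite)
    (x : X) : ¬ AccPt x (𝓟 F) := by
  intro h
  rw [accPt_iff_nhds] at h
  have hcl : IsClosed (F \ {x}) := (hF.subset diff_subset).isClosed
  have hU : (F \ {x})ᶜ ∈ 𝓝 x := hcl.isOpen_compl.mem_nhds (by simp)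
  obtain ⟨y, ⟨hyU, hyF⟩, hyx⟩ := h _ hU
  exact hyU ⟨hyF, hyx⟩

variable {H : Type*} [NormedAddCommGroup H] [InnerProductSpace ℝ H] [CompleteSpace H]

theorem aux_riesz_eig (A : H →L[ℝ] H) (hA : IsCompactOperator ⇑A)
    (hsym : ∀ x y : H, ⟪A x, y⟫ = ⟪x, A y⟫)
    {t : ℝ} (ht : t ≠ 0) (hsp : t ∈ spectrum ℝ A) : ∃ e : H, ‖e‖ = 1 ∧ A e = t • e := by
  by_contra hcon
  push_neg at hcon
  set W := algebraMap ℝ (H →L[ℝ] H) t - A with hWdef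
  have hWapp : ∀ x, W x = t • x - A x := by
    intro x; simp [hWdef, Algebra.algebraMap_eq_smul_one]
  have hinj : ∀ x, W x = 0 → x = 0 := by
    intro x hx
    by_contra hx0
    have h1 : A x = t • x := by
      have h := hWapp x; rw [hx] at h; exact (sub_eq_zero.mp h.symm).symm
    refine hcon (‖x‖⁻¹ • x) (norm_smul_inv_norm hx0) ?_
    rw [A.map_smul, h1, smul_comm]
  -- W is bounded below
  have hbdd : ∃ c > (0:ℝ), ∀ x, c * ‖x‖ ≤ ‖W x‖ := by
    by_contra hb
    push_neg at hb
    have hx : ∀ n : ℕ, ∃ x : H, ‖W x‖ < (1/(n+1)) * ‖x‖ := fun n => hb _ (by positivity)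
    choose x hxlt using hx
    have hx0 : ∀ n, x n ≠ 0 := by
      intro n hn
      have := hxlt n
      rw [hn] at this
      simp at this
    set e : ℕ → H := fun n => ‖x n‖⁻¹ • x n with he
    have hen : ∀ n, ‖e n‖ = 1 := fun n => norm_smul_inv_norm (hx0 n)
    have hWen : ∀ n, ‖W (e n)‖ < 1/(n+1) := by
      intro n
      have hpos : (0:ℝ) < ‖x n‖ := norm_pos_iff.mpr (hx0 n)
      have hWe : ‖W (e n)‖ = ‖x n‖⁻¹ * ‖W (x n)‖ := by
        rw [he]
        simp only
        rw [W.map_smul, norm_smul, norm_inv, norm_norm]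
      rw [hWe]
      calc ‖x n‖⁻¹ * ‖W (x n)‖ < ‖x n‖⁻¹ * ((1/(n+1)) * ‖x n‖) :=
            mul_lt_mul_of_pos_left (hxlt n) (by positivity)
        _ = 1/(n+1) := by field_simp
    have hWlim : Tendsto (fun n => W (e n)) atTop (𝓝 0) := by
      rw [tendsto_zero_iff_norm_tendsto_zero]
      refine squeeze_zero (fun n => norm_nonneg _) (fun n => (hWen n).le) ?_
      exact tendsto_one_div_add_atTop_nhds_zero_nat
    have hcpt := hA.isCompact_closure_image_closedBall 1
    have hmem : ∀ n, A (e n) ∈ closure (⇑A '' Metric.closedBall 0 1) :=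
      fun n => subset_closure (mem_image_of_mem _
        (by rw [Metric.mem_closedBall, dist_zero_right, hen n]))
    obtain ⟨y, _, φ, hφ, hlim⟩ := hcpt.tendsto_subseq hmem
    have helim : Tendsto (fun n => e (φ n)) atTop (𝓝 (t⁻¹ • y)) := by
      have h1 : ∀ n, e (φ n) = t⁻¹ • (A (e (φ n)) + W (e (φ n))) := by
        intro n
        rw [hWapp,
          show A (e (φ n)) + (t • e (φ n) - A (e (φ n))) = t • e (φ n) by abel,
          smul_smul, inv_mul_cancel₀ ht, one_smul]
      have h2 : Tendsto (fun n => t⁻¹ • (A (e (φ n)) + W (e (φ n)))) atTop (𝓝 (t⁻¹ • (y + 0))) :=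
        ((hlim.add (hWlim.comp hφ.tendsto_atTop))).const_smul t⁻¹
      rw [add_zero] at h2
      exact h2.congr (fun n => (h1 n).symm)
    set z := t⁻¹ • y with hz
    have hz1 : ‖z‖ = 1 := by
      have h3 := helim.norm
      simp_rw [hen] at h3
      exact (tendsto_nhds_unique tendsto_const_nhds h3).symm
    have hWz : W z = 0 := by
      have h2 : Tendsto (fun n => W (e (φ n))) atTop (𝓝 (W z)) :=
        (W.continuous.tendsto z).comp helim
      exact tendsto_nhds_unique h2 (hWlim.comp hφ.tendsto_atTop)
    have h4 := hinj z hWz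
    rw [h4] at hz1
    simp at hz1
  obtain ⟨c, hc, hbd⟩ := hbdd
  have hantilip : AntilipschitzWith (Real.toNNReal c)⁻¹ ⇑W := by
    refine W.antilipschitz_of_bound fun x => ?_
    have hco : (((Real.toNNReal c)⁻¹ : ℝ≥0) : ℝ) = c⁻¹ := by
      rw [NNReal.coe_inv, Real.coe_toNNReal c hc.le]
    rw [hco, ← div_eq_inv_mul, le_div_iff₀ hc, mul_comm]
    exact hbd x
  have hclosed : IsClosed (Set.range ⇑W) := hantilip.isClosed_range W.uniformContinuous
  have hsymW : ∀ x y : H, ⟪W x, y⟫ = ⟪x, W y⟫ := by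
    intro x y
    rw [hWapp, hWapp, inner_sub_left, inner_sub_right, real_inner_smul_left,
      real_inner_smul_right, hsym]
  have hrange : LinearMap.range (W : H →ₗ[ℝ] H) = ⊤ := by
    have hcl : IsClosed ((LinearMap.range (W : H →ₗ[ℝ] H) : Submodule ℝ H) : Set H) := by
      have h5 : ((LinearMap.range (W : H →ₗ[ℝ] H) : Submodule ℝ H) : Set H) = Set.range ⇑W := by
        ext w; simp [LinearMap.mem_range]
      rw [h5]; exact hclosed
    haveI : CompleteSpace (LinearMap.range (W : H →ₗ[ℝ] H) : Submodule ℝ H) := hcl.completeSpace_coe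
    rw [← Submodule.orthogonal_eq_bot_iff]
    rw [Submodule.eq_bot_iff]
    intro y hy
    have h3 : ∀ x : H, ⟪x, W y⟫ = 0 := by
      intro x
      have h6 : ⟪W x, y⟫ = 0 := hy (W x) (LinearMap.mem_range_self _ x)
      rwa [hsymW] at h6
    have h4 : W y = 0 := by
      have h7 := h3 (W y)
      rwa [inner_self_eq_zero] at h7
    exact hinj y h4
  have hUnit : IsUnit W := by
    rw [ContinuousLinearMap.isUnit_iff_bijective]
    constructor
    · intro a b hab
      have h8 : W (a - b) = 0 := by rw [map_sub, hab, sub_self]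
      exact sub_eq_zero.mp (hinj _ h8)
    · intro y
      have h9 : y ∈ LinearMap.range (W : H →ₗ[ℝ] H) := hrange ▸ Submodule.mem_top
      exact LinearMap.mem_range.mp h9
  exact spectrum.mem_iff.mp hsp hUnit

theorem aux_riesz_finite (A : H →L[ℝ] H) (hA : IsCompactOperator ⇑A)
    (hsym : ∀ x y : H, ⟪A x, y⟫ = ⟪x, A y⟫)
    {ε : ℝ} (hε : 0 < ε) : {t : ℝ | t ∈ spectrum ℝ A ∧ ε ≤ |t|}.Finite := by
  rw [← Set.not_infinite]
  intro hinf
  set f := hinf.natEmbedding with hf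
  set t : ℕ → ℝ := fun n => (f n : ℝ) with htdef
  have htinj : Function.Injective t := fun a b hab => f.injective (Subtype.ext hab)
  have htsp : ∀ n, t n ∈ spectrum ℝ A := fun n => (f n).2.1
  have htε : ∀ n, ε ≤ |t n| := fun n => (f n).2.2
  have ht0 : ∀ n, t n ≠ 0 := by
    intro n hn
    have h := htε n
    rw [hn, abs_zero] at h
    linarith
  have heig : ∀ n, ∃ e : H, ‖e‖ = 1 ∧ A e = t n • e :=
    fun n => aux_riesz_eig A hA hsym (ht0 n) (htsp n)
  choose e he1 heA using heig
  have horth : ∀ n m, n ≠ m → ⟪e n, e m⟫ = 0 := by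
    intro n m hnm
    have h1 : t n * ⟪e n, e m⟫ = t m * ⟪e n, e m⟫ := by
      calc t n * ⟪e n, e m⟫ = ⟪t n • e n, e m⟫ := (real_inner_smul_left _ _ _).symm
        _ = ⟪A (e n), e m⟫ := by rw [heA]
        _ = ⟪e n, A (e m)⟫ := hsym _ _
        _ = ⟪e n, t m • e m⟫ := by rw [heA]
        _ = t m * ⟪e n, e m⟫ := real_inner_smul_right _ _ _
    have h2 : (t n - t m) * ⟪e n, e m⟫ = 0 := by rw [sub_mul, h1, sub_self]
    rcases mul_eq_zero.mp h2 with h | h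
    · exact absurd (sub_eq_zero.mp h) (fun hh => hnm (htinj hh))
    · exact h
  have hsep : ∀ n m, n ≠ m → ε ≤ ‖A (e n) - A (e m)‖ := by
    intro n m hnm
    have hsq : ‖A (e n) - A (e m)‖^2 = (t n)^2 + (t m)^2 := by
      rw [heA, heA, norm_sub_sq_real, real_inner_smul_left, real_inner_smul_right,
        horth n m hnm, norm_smul, norm_smul, he1, he1]
      simp [mul_pow, sq_abs]
    by_contra hlt
    push_neg at hlt
    have h5 : ‖A (e n) - A (e m)‖^2 < ε^2 := pow_lt_pow_left₀ hlt (norm_nonneg _) (by norm_num)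
    rw [hsq] at h5
    have h6 : ε^2 ≤ (t n)^2 := by
      calc ε^2 ≤ |t n|^2 := pow_le_pow_left₀ hε.le (htε n) 2
        _ = (t n)^2 := sq_abs _
    nlinarith [sq_nonneg (t m)]
  have hcpt := hA.isCompact_closure_image_closedBall 1
  have hmem : ∀ n, A (e n) ∈ closure (⇑A '' Metric.closedBall 0 1) :=
    fun n => subset_closure (mem_image_of_mem _
      (by rw [Metric.mem_closedBall, dist_zero_right, he1 n]))
  obtain ⟨y, _, φ, hφ, hlim⟩ := hcpt.tendsto_subseq hmem
  have hev : ∀ᶠ n in atTop, dist (A (e (φ n))) y < ε/2 :=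
    (Metric.tendsto_nhds.mp hlim) (ε/2) (by positivity)
  obtain ⟨N, hN⟩ := eventually_atTop.mp hev
  have h7 : dist (A (e (φ N))) (A (e (φ (N+1)))) < ε :=
    calc dist (A (e (φ N))) (A (e (φ (N+1))))
        ≤ dist (A (e (φ N))) y + dist (A (e (φ (N+1)))) y := dist_triangle_right _ _ _
      _ < ε/2 + ε/2 := add_lt_add (hN N le_rfl) (hN (N+1) (by norm_num))
      _ = ε := by ring
  have h8 : ε ≤ dist (A (e (φ N))) (A (e (φ (N+1)))) := by
    rw [dist_eq_norm]
    exact hsep _ _ (fun hh => by simpa using hφ.injective hh)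
  linarith

instance : IsProbabilityMeasure μ01 := by
  constructor
  rw [μ01, Measure.restrict_apply_univ, Real.volume_Icc]
  norm_num

theorem μ01_def : μ01 = volume.restrict (Icc (0:ℝ) 1) := rfl

section Kfacts

variable {φ : ℝ → ℝ} {K : ℝ → ℝ → ℝ}

theorem K_cont (hφ : Continuous φ)
    (hK : ∀ s ζ, K s ζ = ∫ σ in max s ζ..1, Real.cos (φ σ)) :
    Continuous fun p : ℝ × ℝ => K p.1 p.2 := by
  have hint : ∀ a b : ℝ, IntervalIntegrable (fun σ => Real.cos (φ σ)) volume a b :=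
    fun a b => (Real.continuous_cos.comp hφ).intervalIntegrable a b
  have hF : Continuous fun a : ℝ => ∫ σ in a..1, Real.cos (φ σ) := by
    have h1 : Continuous fun a : ℝ => ∫ σ in (1:ℝ)..a, Real.cos (φ σ) :=
      intervalIntegral.continuous_primitive hint 1
    have h2 : (fun a : ℝ => ∫ σ in a..1, Real.cos (φ σ))
        = fun a : ℝ => -∫ σ in (1:ℝ)..a, Real.cos (φ σ) := by
      funext a; rw [intervalIntegral.integral_symm]
    rw [h2]
    exact h1.neg
  have h3 : (fun p : ℝ × ℝ => K p.1 p.2) = fun p : ℝ × ℝ =>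
      ∫ σ in max p.1 p.2..1, Real.cos (φ σ) := by funext p; rw [hK]
  rw [h3]
  exact hF.comp (continuous_fst.max continuous_snd)

theorem K_lip (hφ : Continuous φ)
    (hK : ∀ s ζ, K s ζ = ∫ σ in max s ζ..1, Real.cos (φ σ)) (s t ζ : ℝ) :
    |K s ζ - K t ζ| ≤ |s - t| := by
  have hint : ∀ a b : ℝ, IntervalIntegrable (fun σ => Real.cos (φ σ)) volume a b :=
    fun a b => (Real.continuous_cos.comp hφ).intervalIntegrable a b
  have h1 : K s ζ - K t ζ = ∫ σ in max s ζ..max t ζ, Real.cos (φ σ) := by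
    rw [hK, hK, ← intervalIntegral.integral_add_adjacent_intervals (hint (max s ζ) (max t ζ))
      (hint (max t ζ) 1)]
    ring
  rw [h1, ← Real.norm_eq_abs (∫ σ in max s ζ..max t ζ, Real.cos (φ σ))]
  calc ‖∫ σ in max s ζ..max t ζ, Real.cos (φ σ)‖ ≤ 1 * |max t ζ - max s ζ| :=
        intervalIntegral.norm_integral_le_of_norm_le_const
          (fun x _ => by rw [Real.norm_eq_abs]; exact Real.abs_cos_le_one (φ x))
    _ = |max s ζ - max t ζ| := by rw [one_mul, abs_sub_comm]
    _ ≤ |s - t| := abs_max_sub_max_le_abs s t ζ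

theorem K_bnd (hφ : Continuous φ)
    (hK : ∀ s ζ, K s ζ = ∫ σ in max s ζ..1, Real.cos (φ σ)) {s ζ : ℝ}
    (hs : s ∈ Icc (0:ℝ) 1) (hζ : ζ ∈ Icc (0:ℝ) 1) : |K s ζ| ≤ 1 := by
  rw [hK]
  have hm : max s ζ ∈ Icc (0:ℝ) 1 := by
    constructor
    · exact le_max_of_le_left hs.1
    · exact max_le hs.2 hζ.2
  rw [← Real.norm_eq_abs (∫ σ in max s ζ..1, Real.cos (φ σ))]
  calc ‖∫ σ in max s ζ..1, Real.cos (φ σ)‖ ≤ 1 * |1 - max s ζ| :=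
        intervalIntegral.norm_integral_le_of_norm_le_const
          (fun x _ => by rw [Real.norm_eq_abs]; exact Real.abs_cos_le_one (φ x))
    _ ≤ 1 := by rw [one_mul, abs_of_nonneg (by linarith [hm.2])]; linarith [hm.1]

theorem K_bnd' (hφ : Continuous φ)
    (hK : ∀ s ζ, K s ζ = ∫ σ in max s ζ..1, Real.cos (φ σ)) (s : ℝ) {ζ : ℝ}
    (hζ : ζ ∈ Icc (0:ℝ) 1) : |K s ζ| ≤ |1 - s| + 1 := by
  rw [hK]
  rw [← Real.norm_eq_abs (∫ σ in max s ζ..1, Real.cos (φ σ))]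
  calc ‖∫ σ in max s ζ..1, Real.cos (φ σ)‖ ≤ 1 * |1 - max s ζ| :=
        intervalIntegral.norm_integral_le_of_norm_le_const
          (fun x _ => by rw [Real.norm_eq_abs]; exact Real.abs_cos_le_one (φ x))
    _ ≤ |1 - s| + 1 := by
        rw [one_mul]
        rcases max_cases s ζ with ⟨h1, _⟩ | ⟨h1, _⟩ <;> rw [h1]
        · linarith [abs_nonneg (1 - s)]
        · rw [abs_of_nonneg (by linarith [hζ.2])]
          linarith [abs_nonneg (1 - s), hζ.1]

end Kfacts

theorem ae_mem01 : ∀ᵐ ζ ∂μ01, ζ ∈ Icc (0:ℝ) 1 := by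
  rw [μ01_def]; exact ae_restrict_mem measurableSet_Icc

theorem integral01 (h : ℝ → ℝ) :
    ∫ ζ in (0:ℝ)..1, h ζ = ∫ ζ, h ζ ∂μ01 := by
  rw [intervalIntegral.integral_of_le zero_le_one, μ01_def]
  exact (integral_Icc_eq_integral_Ioc).symm

theorem lp_integrable (u : Lp ℝ 2 μ01) : Integrable ⇑u μ01 :=
  (MeasureTheory.Lp.memLp u).integrable one_le_two

theorem lp_abs_integral_le_norm (u : Lp ℝ 2 μ01) : ∫ ζ, |u ζ| ∂μ01 ≤ ‖u‖ := by
  set au : Lp ℝ 2 μ01 := |u| with hau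
  set e1 : Lp ℝ 2 μ01 := MeasureTheory.Lp.const 2 μ01 (1:ℝ) with he1
  have h1 : ⟪au, e1⟫ = ∫ ζ, |u ζ| ∂μ01 := by
    rw [MeasureTheory.L2.inner_def]
    apply MeasureTheory.integral_congr_ae
    filter_upwards [MeasureTheory.Lp.coeFn_abs u, MeasureTheory.Lp.coeFn_const 2 μ01 (1:ℝ)]
      with a ha hb
    rw [ha, hb]
    simp [RCLike.inner_apply, starRingEnd_apply, star_trivial]
  have h2 : ‖au‖ = ‖u‖ := by
    rw [MeasureTheory.Lp.norm_def, MeasureTheory.Lp.norm_def]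
    congr 1
    rw [eLpNorm_congr_ae (MeasureTheory.Lp.coeFn_abs u)]
    rw [show (fun x => |u x|) = fun x => ‖u x‖ by funext x; rw [Real.norm_eq_abs]]
    exact eLpNorm_norm _
  have h3 : ‖e1‖ ≤ 1 := by
    refine le_trans (MeasureTheory.Lp.norm_const_le _ _ _) ?_
    simp
  calc ∫ ζ, |u ζ| ∂μ01 = ⟪au, e1⟫ := h1.symm
    _ ≤ ‖au‖ * ‖e1‖ := real_inner_le_norm _ _
    _ ≤ ‖u‖ * 1 := by
        rw [h2]
        exact mul_le_mul_of_nonneg_left h3 (norm_nonneg u)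
    _ = ‖u‖ := mul_one _

section Gfacts

variable {φ : ℝ → ℝ} {K : ℝ → ℝ → ℝ}
variable (hφ : Continuous φ) (hK : ∀ s ζ, K s ζ = ∫ σ in max s ζ..1, Real.cos (φ σ))

include hφ hK

theorem integrand_integrable (u : Lp ℝ 2 μ01) (s : ℝ) :
    Integrable (fun ζ => K s ζ * u ζ) μ01 := by
  refine Integrable.mono' (((lp_integrable u).norm).const_mul (|1 - s| + 1)) ?_ ?_
  · exact (((K_cont hφ hK).comp (continuous_const.prodMk continuous_id)).aestronglyMeasurable).mul
      (MeasureTheory.Lp.aestronglyMeasurable u)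
  · filter_upwards [ae_mem01] with ζ hζ
    rw [norm_mul, Real.norm_eq_abs, Real.norm_eq_abs]
    exact mul_le_mul_of_nonneg_right (K_bnd' hφ hK s hζ) (abs_nonneg _)

omit hφ hK in
/-- the continuous representative of `𝒦 u` -/
noncomputable def gK (K : ℝ → ℝ → ℝ) (u : Lp ℝ 2 μ01) (s : ℝ) : ℝ :=
    ∫ ζ in (0:ℝ)..1, K s ζ * u ζ

omit hφ hK in
theorem gK_eq (u : Lp ℝ 2 μ01) (s : ℝ) : gK K u s = ∫ ζ, K s ζ * u ζ ∂μ01 :=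
  integral01 _

theorem gK_bound (u : Lp ℝ 2 μ01) {s : ℝ} (hs : s ∈ Icc (0:ℝ) 1) :
    |gK K u s| ≤ ∫ ζ, |u ζ| ∂μ01 := by
  rw [gK_eq, ← Real.norm_eq_abs]
  refine le_trans (norm_integral_le_integral_norm _) ?_
  refine integral_mono_ae ((integrand_integrable hφ hK u s).norm) ((lp_integrable u).abs) ?_
  filter_upwards [ae_mem01] with ζ hζ
  rw [Real.norm_eq_abs, abs_mul]
  calc |K s ζ| * |u ζ| ≤ 1 * |u ζ| :=
        mul_le_mul_of_nonneg_right (K_bnd hφ hK hs hζ) (abs_nonneg _)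
    _ = |u ζ| := one_mul _

theorem gK_lip (u : Lp ℝ 2 μ01) (s t : ℝ) :
    |gK K u s - gK K u t| ≤ |s - t| * ∫ ζ, |u ζ| ∂μ01 := by
  have h1 : gK K u s - gK K u t = ∫ ζ, (K s ζ - K t ζ) * u ζ ∂μ01 := by
    rw [gK_eq, gK_eq, ← MeasureTheory.integral_sub (integrand_integrable hφ hK u s)
      (integrand_integrable hφ hK u t)]
    congr 1
    funext ζ
    ring
  rw [h1, ← Real.norm_eq_abs]
  refine le_trans (norm_integral_le_integral_norm _) ?_
  have h2 : ∫ ζ, |s - t| * |u ζ| ∂μ01 = |s - t| * ∫ ζ, |u ζ| ∂μ01 :=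
    integral_const_mul _ _
  rw [← h2]
  refine integral_mono_ae
    (((integrand_integrable hφ hK u s).sub (integrand_integrable hφ hK u t)).norm.congr ?_)
    (((lp_integrable u).abs).const_mul _) ?_
  · filter_upwards with ζ
    rw [Real.norm_eq_abs]
    congr 1
    simp only [Pi.sub_apply]
    ring
  · filter_upwards with ζ
    rw [Real.norm_eq_abs, abs_mul]
    exact mul_le_mul_of_nonneg_right (K_lip hφ hK s t ζ) (abs_nonneg _)

theorem gK_cont (u : Lp ℝ 2 μ01) : Continuous (gK K u) := by
  have h0 : 0 ≤ ∫ ζ, |u ζ| ∂μ01 := integral_nonneg (fun ζ => abs_nonneg _)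
  refine LipschitzWith.continuous (K := Real.toNNReal (∫ ζ, |u ζ| ∂μ01)) ?_
  refine LipschitzWith.of_dist_le_mul fun x y => ?_
  rw [Real.dist_eq, Real.dist_eq, Real.coe_toNNReal _ h0, mul_comm]
  exact gK_lip hφ hK u x y

omit hφ hK in
theorem coeFn_K_eq_gK (𝒦 : Lp ℝ 2 μ01 →L[ℝ] Lp ℝ 2 μ01)
    (h𝒦 : ∀ u : Lp ℝ 2 μ01, ⇑(𝒦 u) =ᵐ[μ01] fun s => ∫ ζ in (0:ℝ)..1, K s ζ * u ζ)
    (u : Lp ℝ 2 μ01) : ⇑(𝒦 u) =ᵐ[μ01] gK K u := h𝒦 u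

end Gfacts

section Compactness

variable {φ : ℝ → ℝ} {K : ℝ → ℝ → ℝ}
variable (hφ : Continuous φ) (hK : ∀ s ζ, K s ζ = ∫ σ in max s ζ..1, Real.cos (φ σ))

/-- projection onto `[0,1]` as a continuous map -/
noncomputable def projCM : C(ℝ, Icc (0:ℝ) 1) :=
  ⟨fun s => Set.projIcc 0 1 zero_le_one s, continuous_projIcc⟩

/-- composition with the projection, as a continuous linear map on bounded continuous
functions -/
noncomputable def ΦBCF : (Icc (0:ℝ) 1 →ᵇ ℝ) →L[ℝ] (ℝ →ᵇ ℝ) :=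
  LinearMap.mkContinuous
    { toFun := fun f => f.compContinuous projCM
      map_add' := by intro f g; ext x; simp
      map_smul' := by intro c f; ext x; simp }
    1 (fun f => by simpa using f.norm_compContinuous_le projCM)

theorem ΦBCF_apply (f : Icc (0:ℝ) 1 →ᵇ ℝ) (s : ℝ) :
    ΦBCF f s = f (Set.projIcc 0 1 zero_le_one s) := rfl

/-- the set of 1-Lipschitz functions bounded by 1 -/
def ALip : Set (Icc (0:ℝ) 1 →ᵇ ℝ) :=
  {f | LipschitzWith 1 ⇑f ∧ ∀ x, f x ∈ Icc (-1:ℝ) 1}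

theorem ALip_compact : IsCompact (closure ALip) := by
  refine BoundedContinuousFunction.arzela_ascoli (Icc (-1:ℝ) 1) isCompact_Icc ALip
    (fun f x hf => hf.2 x) ?_
  intro x
  rw [Metric.equicontinuousAt_iff]
  intro ε hε
  refine ⟨ε, hε, fun y hy i => ?_⟩
  calc dist (i.1 x) (i.1 y) ≤ 1 * dist x y := i.2.1.dist_le_mul x y
    _ = dist x y := one_mul _
    _ < ε := by rwa [dist_comm]

include hφ hK in
theorem K_compact_op (𝒦 : Lp ℝ 2 μ01 →L[ℝ] Lp ℝ 2 μ01)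
    (h𝒦 : ∀ u : Lp ℝ 2 μ01, ⇑(𝒦 u) =ᵐ[μ01] fun s => ∫ ζ in (0:ℝ)..1, K s ζ * u ζ) :
    IsCompactOperator ⇑𝒦 := by
  set T2 := (BoundedContinuousFunction.toLp (E := ℝ) 2 μ01 ℝ).comp ΦBCF with hT2
  refine ⟨T2 '' closure ALip, (ALip_compact.image T2.continuous), ?_⟩
  refine mem_of_superset (Metric.closedBall_mem_nhds 0 one_pos) ?_
  intro u hu
  rw [Metric.mem_closedBall, dist_zero_right] at hu
  have hIu : ∫ ζ, |u ζ| ∂μ01 ≤ 1 := le_trans (lp_abs_integral_le_norm u) hu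
  have hI0 : (0:ℝ) ≤ ∫ ζ, |u ζ| ∂μ01 := integral_nonneg (fun ζ => abs_nonneg _)
  set f₀ : Icc (0:ℝ) 1 →ᵇ ℝ := BoundedContinuousFunction.mkOfCompact
    ⟨fun x => gK K u ↑x, (gK_cont hφ hK u).comp continuous_subtype_val⟩ with hf₀
  have hf₀app : ∀ x : Icc (0:ℝ) 1, f₀ x = gK K u ↑x := fun x => rfl
  have hf₀mem : f₀ ∈ ALip := by
    constructor
    · refine LipschitzWith.of_dist_le_mul fun x y => ?_
      rw [hf₀app, hf₀app, Real.dist_eq, Subtype.dist_eq, Real.dist_eq, NNReal.coe_one, one_mul]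
      calc |gK K u ↑x - gK K u ↑y| ≤ |(x:ℝ) - (y:ℝ)| * ∫ ζ, |u ζ| ∂μ01 := gK_lip hφ hK u _ _
        _ ≤ |(x:ℝ) - (y:ℝ)| * 1 := mul_le_mul_of_nonneg_left hIu (abs_nonneg _)
        _ = |(x:ℝ) - (y:ℝ)| := mul_one _
    · intro x
      rw [hf₀app]
      have := le_trans (gK_bound hφ hK u x.2) hIu
      exact abs_le.mp this
  have hKu : 𝒦 u = T2 f₀ := by
    apply MeasureTheory.Lp.ext
    have h1 : ⇑(T2 f₀) =ᵐ[μ01] ⇑(ΦBCF f₀) :=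
      BoundedContinuousFunction.coeFn_toLp 2 μ01 ℝ (ΦBCF f₀)
    refine ((h𝒦 u).trans ?_).trans h1.symm
    filter_upwards [ae_mem01] with s hs
    rw [ΦBCF_apply, Set.projIcc_of_mem zero_le_one hs, hf₀app]
    rfl
  exact ⟨f₀, subset_closure hf₀mem, hKu.symm⟩

end Compactness

section Symmetry

variable {φ : ℝ → ℝ} {K : ℝ → ℝ → ℝ}
variable (hφ : Continuous φ) (hK : ∀ s ζ, K s ζ = ∫ σ in max s ζ..1, Real.cos (φ σ))

include hφ hK in
theorem K_symm_op (𝒦 : Lp ℝ 2 μ01 →L[ℝ] Lp ℝ 2 μ01)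
    (h𝒦 : ∀ u : Lp ℝ 2 μ01, ⇑(𝒦 u) =ᵐ[μ01] fun s => ∫ ζ in (0:ℝ)..1, K s ζ * u ζ)
    (u v : Lp ℝ 2 μ01) : ⟪𝒦 u, v⟫ = ⟪u, 𝒦 v⟫ := by
  have hKsymm : ∀ s ζ, K s ζ = K ζ s := by intro s ζ; rw [hK, hK, max_comm]
  have haeprod : ∀ᵐ z : ℝ×ℝ ∂(μ01.prod μ01), z.1 ∈ Icc (0:ℝ) 1 ∧ z.2 ∈ Icc (0:ℝ) 1 := by
    have hpr : μ01.prod μ01 = (volume.prod volume).restrict ((Icc (0:ℝ) 1) ×ˢ (Icc (0:ℝ) 1)) := by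
      rw [μ01_def, Measure.prod_restrict]
    rw [hpr]
    filter_upwards [ae_restrict_mem (measurableSet_Icc.prod measurableSet_Icc)] with z hz
    exact mem_prod.mp hz
  have hprod : Integrable (fun z : ℝ × ℝ => K z.1 z.2 * u z.2 * v z.1) (μ01.prod μ01) := by
    have hmeas : AEStronglyMeasurable (fun z : ℝ×ℝ => K z.1 z.2 * u z.2 * v z.1)
        (μ01.prod μ01) :=
      (((K_cont hφ hK).aestronglyMeasurable).mul
        ((MeasureTheory.Lp.aestronglyMeasurable u).comp_snd)).mul
        ((MeasureTheory.Lp.aestronglyMeasurable v).comp_fst)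
    have hdom : Integrable (fun z : ℝ×ℝ => ‖v z.1‖ * ‖u z.2‖) (μ01.prod μ01) :=
      (lp_integrable v).norm.mul_prod (lp_integrable u).norm
    refine Integrable.mono' hdom hmeas ?_
    filter_upwards [haeprod] with z hz
    rw [norm_mul, norm_mul, Real.norm_eq_abs (K z.1 z.2)]
    calc |K z.1 z.2| * ‖u z.2‖ * ‖v z.1‖ ≤ 1 * ‖u z.2‖ * ‖v z.1‖ := by
          have := K_bnd hφ hK hz.1 hz.2
          gcongr
      _ = ‖v z.1‖ * ‖u z.2‖ := by ring
  calc ⟪𝒦 u, v⟫ = ∫ x, (𝒦 u) x * v x ∂μ01 := by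
        rw [MeasureTheory.L2.inner_def]
        apply MeasureTheory.integral_congr_ae
        filter_upwards with a
        simp [RCLike.inner_apply, starRingEnd_apply, star_trivial]
        ring
    _ = ∫ x, (∫ ζ, K x ζ * u ζ ∂μ01) * v x ∂μ01 := by
        apply MeasureTheory.integral_congr_ae
        filter_upwards [h𝒦 u] with x hx
        rw [hx, integral01]
    _ = ∫ x, ∫ ζ, K x ζ * u ζ * v x ∂μ01 ∂μ01 := by
        apply MeasureTheory.integral_congr_ae
        filter_upwards with x
        rw [← MeasureTheory.integral_mul_const]
    _ = ∫ ζ, ∫ x, K x ζ * u ζ * v x ∂μ01 ∂μ01 :=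
        MeasureTheory.integral_integral_swap hprod
    _ = ∫ ζ, u ζ * ∫ x, K ζ x * v x ∂μ01 ∂μ01 := by
        apply MeasureTheory.integral_congr_ae
        filter_upwards with ζ
        rw [← MeasureTheory.integral_const_mul]
        apply MeasureTheory.integral_congr_ae
        filter_upwards with x
        rw [hKsymm x ζ]
        ring
    _ = ∫ ζ, u ζ * (𝒦 v) ζ ∂μ01 := by
        apply MeasureTheory.integral_congr_ae
        filter_upwards [h𝒦 v] with ζ hζ
        rw [hζ, integral01]
    _ = ⟪u, 𝒦 v⟫ := by
        rw [MeasureTheory.L2.inner_def]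
        apply MeasureTheory.integral_congr_ae
        filter_upwards with a
        simp [RCLike.inner_apply, starRingEnd_apply, star_trivial]
        ring

end Symmetry

section Endpoint

theorem cont_endpoint_right {f : ℝ → ℝ} (hf : Continuous f) {a b c : ℝ} (hab : a < b)
    (h : ∀ᵐ s ∂(volume.restrict (Ioc a b)), f s = c) : f b = c := by
  by_contra hne
  set η := |f b - c| with hη
  have hη0 : 0 < η := abs_pos.mpr (sub_ne_zero.mpr hne)
  obtain ⟨δ, hδ0, hδ⟩ := Metric.continuousAt_iff.mp (hf.continuousAt (x := b)) η hη0
  set a' := max a (b - δ) with ha'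
  have ha'b : a' < b := max_lt hab (by linarith)
  have hsub : Ioc a' b ⊆ {s | s ∈ Ioc a b ∧ f s ≠ c} := by
    intro s hs
    have hs1 : a < s := lt_of_le_of_lt (le_max_left _ _) hs.1
    have hs2 : b - δ < s := lt_of_le_of_lt (le_max_right _ _) hs.1
    have hd : dist s b < δ := by
      rw [Real.dist_eq, abs_of_nonpos (by linarith [hs.2])]
      linarith
    have hfs : dist (f s) (f b) < η := hδ hd
    refine ⟨⟨hs1, hs.2⟩, fun hfc => ?_⟩
    rw [hfc, Real.dist_eq, abs_sub_comm] at hfs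
    exact absurd hfs (lt_irrefl _)
  rw [MeasureTheory.ae_restrict_iff' measurableSet_Ioc] at h
  rw [MeasureTheory.ae_iff] at h
  have h0 : volume (Ioc a' b) = 0 := by
    refine measure_mono_null ?_ h
    intro s hs
    have := hsub hs
    simp only [Set.mem_setOf_eq, Classical.not_imp]
    exact this
  rw [Real.volume_Ioc] at h0
  exact absurd h0 (ne_of_gt (ENNReal.ofReal_pos.mpr (by linarith)))

theorem cont_endpoint_left {f : ℝ → ℝ} (hf : Continuous f) {a b c : ℝ} (hab : a < b)
    (h : ∀ᵐ s ∂(volume.restrict (Ioc a b)), f s = c) : f a = c := by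
  by_contra hne
  set η := |f a - c| with hη
  have hη0 : 0 < η := abs_pos.mpr (sub_ne_zero.mpr hne)
  obtain ⟨δ, hδ0, hδ⟩ := Metric.continuousAt_iff.mp (hf.continuousAt (x := a)) η hη0
  set b' := min b (a + δ/2) with hb'
  have hab' : a < b' := lt_min hab (by linarith)
  have hsub : Ioc a b' ⊆ {s | s ∈ Ioc a b ∧ f s ≠ c} := by
    intro s hs
    have hs1 : s ≤ b := le_trans hs.2 (min_le_left _ _)
    have hs2 : s ≤ a + δ/2 := le_trans hs.2 (min_le_right _ _)
    have hd : dist s a < δ := by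
      rw [Real.dist_eq, abs_of_pos (by linarith [hs.1])]
      linarith [hs.1]
    have hfs : dist (f s) (f a) < η := hδ hd
    refine ⟨⟨hs.1, hs1⟩, fun hfc => ?_⟩
    rw [hfc, Real.dist_eq, abs_sub_comm] at hfs
    exact absurd hfs (lt_irrefl _)
  rw [MeasureTheory.ae_restrict_iff' measurableSet_Ioc, MeasureTheory.ae_iff] at h
  have h0 : volume (Ioc a b') = 0 := by
    refine measure_mono_null ?_ h
    intro s hs
    have := hsub hs
    simp only [Set.mem_setOf_eq, Classical.not_imp]
    exact this
  rw [Real.volume_Ioc] at h0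
  exact absurd h0 (ne_of_gt (ENNReal.ofReal_pos.mpr (by linarith)))

theorem restrict_sub01 {S : Set ℝ} (hS : MeasurableSet S) (hsub : S ⊆ Icc (0:ℝ) 1) :
    μ01.restrict S = volume.restrict S := by
  rw [μ01_def, Measure.restrict_restrict hS, inter_eq_self_of_subset_left hsub]

end Endpoint

section ZeroSpec

variable {φ : ℝ → ℝ} {K : ℝ → ℝ → ℝ}
variable (hφ : Continuous φ) (hK : ∀ s ζ, K s ζ = ∫ σ in max s ζ..1, Real.cos (φ σ))

include hφ hK in
theorem zero_in_spec (γ : ℝ) (hγ : 0 < γ) (𝒦 : Lp ℝ 2 μ01 →L[ℝ] Lp ℝ 2 μ01)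
    (h𝒦 : ∀ u : Lp ℝ 2 μ01, ⇑(𝒦 u) =ᵐ[μ01] fun s => ∫ ζ in (0:ℝ)..1, K s ζ * u ζ) :
    (0:ℝ) ∈ spectrum ℝ (γ • 𝒦) := by
  rw [spectrum.mem_iff]
  intro hunit
  rw [map_zero, zero_sub] at hunit
  have hunit' : IsUnit (γ • 𝒦) := by
    have h := hunit.neg
    rwa [neg_neg] at h
  have hsurj : Function.Surjective ⇑(γ • 𝒦) :=
    (ContinuousLinearMap.isUnit_iff_bijective.mp hunit').2
  set u₀ : Lp ℝ 2 μ01 := indicatorConstLp 2 measurableSet_Ioc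
    (measure_ne_top μ01 (Ioc (0:ℝ) 2⁻¹)) (1:ℝ) with hu₀
  obtain ⟨v, hv⟩ := hsurj u₀
  set w := γ • v with hw
  have hKw : 𝒦 w = u₀ := by
    rw [hw, 𝒦.map_smul, ← ContinuousLinearMap.smul_apply, hv]
  have hae : (Set.indicator (Ioc (0:ℝ) 2⁻¹) fun _ => (1:ℝ)) =ᵐ[μ01] gK K w := by
    have h1 : ⇑u₀ =ᵐ[μ01] Set.indicator (Ioc (0:ℝ) 2⁻¹) fun _ => (1:ℝ) :=
      indicatorConstLp_coeFn
    have h2 : ⇑u₀ =ᵐ[μ01] gK K w := by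
      rw [← hKw]
      exact h𝒦 w
    exact h1.symm.trans h2
  -- restrict to the two halves
  have hsub1 : Ioc (0:ℝ) 2⁻¹ ⊆ Icc (0:ℝ) 1 := fun x hx => ⟨hx.1.le, le_trans hx.2 (by norm_num)⟩
  have hsub2 : Ioc (2⁻¹:ℝ) 1 ⊆ Icc (0:ℝ) 1 := fun x hx => ⟨le_trans (by norm_num) hx.1.le, hx.2⟩
  have hleft : gK K w 2⁻¹ = 1 := by
    refine cont_endpoint_right (gK_cont hφ hK w) (show (0:ℝ) < 2⁻¹ by norm_num) ?_
    rw [← restrict_sub01 measurableSet_Ioc hsub1]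
    have h3 := MeasureTheory.ae_restrict_of_ae (s := Ioc (0:ℝ) 2⁻¹) hae
    filter_upwards [h3, ae_restrict_mem measurableSet_Ioc] with s hs hmem
    rw [← hs, Set.indicator_of_mem hmem]
  have hright : gK K w 2⁻¹ = 0 := by
    refine cont_endpoint_left (gK_cont hφ hK w) (show (2⁻¹:ℝ) < 1 by norm_num) ?_
    rw [← restrict_sub01 measurableSet_Ioc hsub2]
    have h3 := MeasureTheory.ae_restrict_of_ae (s := Ioc (2⁻¹:ℝ) 1) hae
    filter_upwards [h3, ae_restrict_mem measurableSet_Ioc] with s hs hmem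
    rw [← hs, Set.indicator_of_notMem]
    intro hmem'
    exact absurd hmem'.2 (not_le.mpr hmem.1)
  rw [hleft] at hright
  norm_num at hright

end ZeroSpec


/-- for the linearization `ℒ(ξ, ξ°) = (ξ° − ξ + γ𝒦ξ, 0)` on `L²(0,1) × ℝ`,
a nonzero `λ` lies in `σ(ℒ)` iff `1 + λ ∈ σ(γ𝒦)`; moreover `σ(ℒ)` is countable,
contains `−1`, and `−1` is its only possible accumulation point. -/
theorem stmt_5 (φ : ℝ → ℝ) (hφ : Continuous φ) (γ : ℝ) (hγ : 0 < γ)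
    (K : ℝ → ℝ → ℝ)
    (hK : ∀ s ζ, K s ζ = ∫ σ in max s ζ..1, Real.cos (φ σ))
    (𝒦 : Lp ℝ 2 μ01 →L[ℝ] Lp ℝ 2 μ01)
    (h𝒦 : ∀ u : Lp ℝ 2 μ01, ⇑(𝒦 u) =ᵐ[μ01] fun s => ∫ ζ in (0:ℝ)..1, K s ζ * u ζ)
    (L : (Lp ℝ 2 μ01 × ℝ) →L[ℝ] (Lp ℝ 2 μ01 × ℝ))
    (hL1 : ∀ v : Lp ℝ 2 μ01 × ℝ,
      ⇑((L v).1) =ᵐ[μ01] fun s => v.2 - v.1 s + γ * (𝒦 v.1) s)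
    (hL2 : ∀ v : Lp ℝ 2 μ01 × ℝ, (L v).2 = 0) :
    (∀ lam : ℝ, lam ≠ 0 →
      (lam ∈ spectrum ℝ L ↔ 1 + lam ∈ spectrum ℝ (γ • 𝒦))) ∧
    (spectrum ℝ L).Countable ∧
    (-1 : ℝ) ∈ spectrum ℝ L ∧
    (∀ x : ℝ, AccPt x (𝓟 (spectrum ℝ L)) → x = -1) := by
  classical
  set A : Lp ℝ 2 μ01 →L[ℝ] Lp ℝ 2 μ01 := γ • 𝒦 with hA
  -- symmetry of A
  have hsymA : ∀ u v : Lp ℝ 2 μ01, ⟪A u, v⟫ = ⟪u, A v⟫ := by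
    intro u v
    rw [hA]
    rw [ContinuousLinearMap.smul_apply, ContinuousLinearMap.smul_apply,
      real_inner_smul_left, real_inner_smul_right, K_symm_op hφ hK 𝒦 h𝒦]
  -- compactness of A
  have hcptA : IsCompactOperator ⇑A := by
    have hc := K_compact_op hφ hK 𝒦 h𝒦
    have hcoe : ⇑A = γ • ⇑𝒦 := by funext x; rw [hA]; rfl
    rw [hcoe]
    exact hc.smul γ
  -- the structured form of L
  set e : Lp ℝ 2 μ01 := MeasureTheory.Lp.const 2 μ01 (1:ℝ) with he
  set T : Lp ℝ 2 μ01 →L[ℝ] Lp ℝ 2 μ01 := A - 1 with hT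
  have hLM : L = (ContinuousLinearMap.inl ℝ (Lp ℝ 2 μ01) ℝ).comp
      (T.comp (ContinuousLinearMap.fst ℝ (Lp ℝ 2 μ01) ℝ)
        + (ContinuousLinearMap.snd ℝ (Lp ℝ 2 μ01) ℝ).smulRight e) := by
    refine ContinuousLinearMap.ext fun v => ?_
    have hRv : ((ContinuousLinearMap.inl ℝ (Lp ℝ 2 μ01) ℝ).comp
        (T.comp (ContinuousLinearMap.fst ℝ (Lp ℝ 2 μ01) ℝ)
          + (ContinuousLinearMap.snd ℝ (Lp ℝ 2 μ01) ℝ).smulRight e)) v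
        = (T v.1 + v.2 • e, (0:ℝ)) := rfl
    rw [hRv]
    refine Prod.ext ?_ (hL2 v)
    apply MeasureTheory.Lp.ext
    have hTv : T v.1 + v.2 • e = γ • (𝒦 v.1) - v.1 + v.2 • e := by
      rw [hT, ContinuousLinearMap.sub_apply, ContinuousLinearMap.one_apply, hA]
      rfl
    rw [show ((T v.1 + v.2 • e, (0:ℝ)) : Lp ℝ 2 μ01 × ℝ).1 = T v.1 + v.2 • e from rfl, hTv]
    refine (hL1 v).trans ?_
    filter_upwards [MeasureTheory.Lp.coeFn_add (γ • (𝒦 v.1) - v.1) (v.2 • e),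
      MeasureTheory.Lp.coeFn_sub (γ • (𝒦 v.1)) v.1,
      MeasureTheory.Lp.coeFn_smul γ (𝒦 v.1),
      MeasureTheory.Lp.coeFn_smul v.2 e,
      MeasureTheory.Lp.coeFn_const 2 μ01 (1:ℝ)] with s h1 h2 h3 h4 h5
    rw [h1, Pi.add_apply, h2, Pi.sub_apply, h3, Pi.smul_apply, h4, Pi.smul_apply, h5]
    simp only [smul_eq_mul, Function.const_apply]
    ring
  -- part 1 : spectrum equivalence
  have helem : ∀ lam : ℝ, algebraMap ℝ (Lp ℝ 2 μ01 →L[ℝ] Lp ℝ 2 μ01) (1 + lam) - A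
      = algebraMap ℝ _ lam - T := by
    intro lam
    rw [map_add, map_one, hT]
    abel
  have part1 : ∀ lam : ℝ, lam ≠ 0 →
      (lam ∈ spectrum ℝ L ↔ 1 + lam ∈ spectrum ℝ A) := by
    intro lam hlam
    rw [hLM, aux_spec_prod T e lam hlam, spectrum.mem_iff, spectrum.mem_iff, helem]
  -- -1 belongs to the spectrum
  have hzeroA : (0:ℝ) ∈ spectrum ℝ A := zero_in_spec hφ hK γ hγ 𝒦 h𝒦
  have hm1 : (-1:ℝ) ∈ spectrum ℝ L := by
    refine (part1 (-1) (by norm_num)).mpr ?_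
    rw [show (1:ℝ) + -1 = 0 by norm_num]
    exact hzeroA
  -- countability
  have hcountA : (spectrum ℝ A).Countable := by
    have hsub : spectrum ℝ A ⊆ {0} ∪ ⋃ n : ℕ,
        {t : ℝ | t ∈ spectrum ℝ A ∧ 1/(n+1) ≤ |t|} := by
      intro t ht
      by_cases h : t = 0
      · exact Or.inl (by simp [h])
      · right
        obtain ⟨n, hn⟩ := exists_nat_one_div_lt (abs_pos.mpr h)
        exact mem_iUnion.mpr ⟨n, ht, hn.le⟩
    refine Set.Countable.mono hsub ?_
    refine (Set.countable_singleton 0).union (Set.countable_iUnion fun n => ?_)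
    exact (aux_riesz_finite A hcptA hsymA (by positivity)).countable
  have hsubL : spectrum ℝ L ⊆ {0} ∪ (fun lam => 1 + lam) ⁻¹' (spectrum ℝ A) := by
    intro lam hl
    by_cases h : lam = 0
    · exact Or.inl (by simp [h])
    · exact Or.inr ((part1 lam h).mp hl)
  have hcountL : (spectrum ℝ L).Countable := by
    refine Set.Countable.mono hsubL ?_
    exact (Set.countable_singleton 0).union
      (hcountA.preimage (fun a b hab => by simpa using hab))
  refine ⟨part1, hcountL, hm1, ?_⟩
  -- accumulation points
  intro x hx
  by_contra hne
  have h1x : (1:ℝ) + x ≠ 0 := fun h => hne (by linarith)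
  have hx' : AccPt x (𝓟 ({0} ∪ (fun lam => 1 + lam) ⁻¹' (spectrum ℝ A))) :=
    hx.mono (principal_mono.mpr hsubL)
  rw [← Filter.sup_principal, accPt_sup] at hx'
  rcases hx' with h0 | hacc
  · exact aux_accPt_finite (Set.finite_singleton 0) x h0
  · -- transfer to an accumulation point of the spectrum of A at 1 + x
    have haccA : AccPt (1 + x) (𝓟 (spectrum ℝ A)) := by
      rw [accPt_iff_nhds]
      intro U hU
      have hV : (fun lam : ℝ => 1 + lam) ⁻¹' U ∈ 𝓝 x := by
        refine ContinuousAt.preimage_mem_nhds ?_ ?_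
        · exact (continuous_const.add continuous_id).continuousAt
        · simpa using hU
      obtain ⟨y, ⟨hyV, hyS⟩, hyx⟩ := accPt_iff_nhds.mp hacc _ hV
      exact ⟨1 + y, ⟨hyV, hyS⟩, fun hc => hyx (by linarith [add_left_cancel hc])⟩
    set ε : ℝ := |1 + x| / 2 with hε
    have hε0 : 0 < ε := by
      rw [hε]
      have := abs_pos.mpr h1x
      linarith
    have hF : {t : ℝ | t ∈ spectrum ℝ A ∧ ε ≤ |t|}.Finite :=
      aux_riesz_finite A hcptA hsymA hε0
    have haccF : AccPt (1 + x) (𝓟 {t : ℝ | t ∈ spectrum ℝ A ∧ ε ≤ |t|}) := by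
      rw [accPt_iff_nhds]
      intro U hU
      have hU' : U ∩ Metric.ball (1 + x) ε ∈ 𝓝 (1 + x) :=
        Filter.inter_mem hU (Metric.ball_mem_nhds _ hε0)
      obtain ⟨y, ⟨⟨hyU, hyB⟩, hyS⟩, hyx⟩ := accPt_iff_nhds.mp haccA _ hU'
      refine ⟨y, ⟨hyU, hyS, ?_⟩, hyx⟩
      rw [Metric.mem_ball, Real.dist_eq] at hyB
      have htri : |1 + x| ≤ |y| + |y - (1 + x)| := by
        calc |1 + x| = |y - (y - (1 + x))| := by ring_nf
          _ ≤ |y| + |y - (1 + x)| := abs_sub _ _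
      rw [hε]
      linarith [abs_nonneg (1 + x)]
    exact aux_accPt_finite hF (1 + x) haccF
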